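/- Let θ ∈ (0,1) be irrational, let p_n/q_n (n ≥ 0) be the continued fraction convergents of θ, and set β_n = |q_nθ − p_n|. Let π : ℝ → ℝ/ℤ be the projection, and for each n define the arc I_n ⊆ ℝ/ℤ by I_n = π([0, β_n)) if n is even and I_n = π([−β_n, 0)) if n is odd. Then for every n ≥ 0, the q_{n+1} arcs π(iθ) + I_n for 0 ≤ i < q_{n+1}, together with the q_n arcs π(iθ) + I_{n+1} for 0 ≤ i < q_n, are pairwise disjoint, and their union is all of ℝ/ℤ. (This is the n-th dynamical partition of the circle for the rotation x ↦ x + θ: the collection covers the circle and any two distinct elements have disjoint interiors.) -/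

import Mathlib

open Set

/-- The Gauss map `x ↦ {1/x}`. -/
noncomputable def gaussMap : ℝ → ℝ := fun x => Int.fract (1 / x)
/-- The `(n+1)`-st partial quotient of `θ`: `a_{n+1} = ⌊1 / Gⁿ(θ)⌋`. -/
noncomputable def cfA (θ : ℝ) (n : ℕ) : ℕ := ⌊1 / (gaussMap^[n] θ)⌋₊

section Basics
variable {θ : ℝ}

lemma gm_iter (hirr : Irrational θ) (h0 : 0 < θ) (h1 : θ < 1) (n : ℕ) :
    Irrational (gaussMap^[n] θ) ∧ 0 < gaussMap^[n] θ ∧ gaussMap^[n] θ < 1 := by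
  induction n with
  | zero => exact ⟨hirr, h0, h1⟩
  | succ n ih =>
    obtain ⟨hi, hp, hl⟩ := ih
    rw [Function.iterate_succ_apply']
    set y := gaussMap^[n] θ
    have hinv : Irrational (1 / y) := by
      rw [one_div]; exact hi.inv
    have hfr : Irrational (Int.fract (1 / y)) := by
      rw [Int.fract]; exact hinv.sub_intCast _
    refine ⟨hfr, ?_, Int.fract_lt_one _⟩
    rcases lt_or_eq_of_le (Int.fract_nonneg (1 / y)) with h | h
    · exact h
    · exact absurd h.symm (by exact fun hh => hfr ⟨0, by exact_mod_cast hh.symm⟩)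

end Basics


/-- best approximation inequality in decomposed form -/
lemma absL1 {βn βn1 : ℝ} {qn qn1 a b : ℤ} (hb1 : 0 < βn1) (hbn : βn1 < βn)
    (hqn : 1 ≤ qn) (hqq : qn ≤ qn1) (hk0 : a * qn + b * qn1 ≠ 0)
    (hklo : -qn1 < a * qn + b * qn1) (hkhi : a * qn + b * qn1 < qn1) :
    βn ≤ |(a : ℝ) * βn - (b : ℝ) * βn1| := by
  have hbn0 : 0 < βn := lt_trans hb1 hbn
  rcases lt_trichotomy a 0 with ha | ha | ha <;> rcases lt_trichotomy b 0 with hb | hb | hb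
  · exfalso
    have h1 : a * qn ≤ -qn := by nlinarith
    have h2 : b * qn1 ≤ -qn1 := by nlinarith
    linarith
  · subst hb
    have ha' : (a : ℝ) ≤ -1 := by exact_mod_cast (by omega : a ≤ -1)
    rw [le_abs]; right; push_cast; nlinarith
  · have ha' : (a : ℝ) ≤ -1 := by exact_mod_cast (by omega : a ≤ -1)
    have hb' : (1 : ℝ) ≤ b := by exact_mod_cast (by omega : 1 ≤ b)
    rw [le_abs]; right; nlinarith
  · exfalso
    have h2 : b * qn1 ≤ -qn1 := by nlinarith
    simp only [ha, zero_mul, zero_add] at hklo hkhi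
    linarith
  · exfalso; apply hk0; rw [ha, hb]; ring
  · exfalso
    have h2 : qn1 ≤ b * qn1 := by nlinarith
    simp only [ha, zero_mul, zero_add] at hklo hkhi
    linarith
  · have ha' : (1 : ℝ) ≤ a := by exact_mod_cast (by omega : 1 ≤ a)
    have hb' : (b : ℝ) ≤ -1 := by exact_mod_cast (by omega : b ≤ -1)
    rw [le_abs]; left; nlinarith
  · subst hb
    have ha' : (1 : ℝ) ≤ a := by exact_mod_cast (by omega : 1 ≤ a)
    rw [le_abs]; left; push_cast; nlinarith
  · exfalso
    have h1 : qn ≤ a * qn := by nlinarith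
    have h2 : qn1 ≤ b * qn1 := by nlinarith
    linarith

/-- cross-family impossibility in decomposed form -/
lemma absL2 {βn βn1 : ℝ} {qn qn1 a b : ℤ} (hb1 : 0 < βn1) (hbn : βn1 < βn)
    (hqn : 1 ≤ qn) (hqq : qn ≤ qn1)
    (hklo : -qn < a * qn + b * qn1) (hkhi : a * qn + b * qn1 < qn1)
    (hvlo : -(βn + βn1) < (a : ℝ) * βn - (b : ℝ) * βn1)
    (hvhi : (a : ℝ) * βn - (b : ℝ) * βn1 < 0) : False := by
  have hbn0 : 0 < βn := lt_trans hb1 hbn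
  rcases lt_trichotomy a 0 with ha | ha | ha
  · rcases eq_or_lt_of_le (show a ≤ -1 by omega) with h | h
    · -- a = -1 : b ≤ 0, k ≤ -qn
      have ha' : (a : ℝ) = -1 := by rw [h]; norm_num
      have hbR : (b : ℝ) < 1 := by nlinarith
      have hb' : b ≤ 0 := by
        have : b < 1 := by exact_mod_cast hbR
        omega
      have h2 : b * qn1 ≤ 0 := mul_nonpos_of_nonpos_of_nonneg hb' (by omega)
      have : a * qn + b * qn1 ≤ -qn := by rw [h]; omega
      linarith
    · -- a ≤ -2 : b ≤ a + 1
      have ha2 : a ≤ -2 := by omega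
      have haR : (a : ℝ) ≤ -2 := by exact_mod_cast ha2
      have hbR : (b : ℝ) < (a : ℝ) + 2 := by nlinarith
      have hb' : b ≤ a + 1 := by
        have : b < a + 2 := by exact_mod_cast hbR
        omega
      have h1 : a * qn ≤ -2 * qn := by nlinarith
      have h2 : b * qn1 ≤ (a + 1) * qn1 := by nlinarith
      have h3 : (a + 1) * qn1 ≤ -qn1 := by nlinarith
      linarith
  · -- a = 0 : 1 ≤ b, k ≥ qn1
    subst ha
    have hbR : (0 : ℝ) < b := by push_cast at hvhi; nlinarith
    have hb' : 1 ≤ b := by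
      have : (0:ℤ) < b := by exact_mod_cast hbR
      omega
    have h2 : qn1 ≤ b * qn1 := by nlinarith
    simp only [zero_mul, zero_add] at hkhi
    linarith
  · -- 1 ≤ a : 2 ≤ b, k ≥ qn + 2 qn1
    have haR : (1 : ℝ) ≤ a := by exact_mod_cast (by omega : 1 ≤ a)
    have hbR : (1 : ℝ) < b := by nlinarith
    have hb' : 2 ≤ b := by
      have : 1 < b := by exact_mod_cast hbR
      omega
    have h1 : qn ≤ a * qn := by nlinarith
    have h2 : 2 * qn1 ≤ b * qn1 := by nlinarith
    linarith


section CF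
variable {θ : ℝ} (hirr : Irrational θ) (h0 : 0 < θ) (h1 : θ < 1)
include hirr h0 h1

/-- `cfRec θ n = ((q_{n−1}, q_n), (p_{n−1}, p_n))`, the continued fraction convergents of `θ`
via the standard recursions `q_{n+1} = a_{n+1} q_n + q_{n−1}`, `p_{n+1} = a_{n+1} p_n + p_{n−1}`
with initial conditions `q_{−1} = 0, q₀ = 1, p_{−1} = 1, p₀ = 0`. -/
noncomputable def cfRec (θ : ℝ) : ℕ → (ℕ × ℕ) × (ℕ × ℕ)
  | 0 => ((0, 1), (1, 0))
  | n + 1 =>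
      (((cfRec θ n).1.2, cfA θ n * (cfRec θ n).1.2 + (cfRec θ n).1.1),
       ((cfRec θ n).2.2, cfA θ n * (cfRec θ n).2.2 + (cfRec θ n).2.1))

/-- The denominator `q_n` of the `n`-th continued fraction convergent of `θ`. -/
noncomputable def cfQ (θ : ℝ) (n : ℕ) : ℕ := ((cfRec θ n).1).2
/-- The numerator `p_n` of the `n`-th continued fraction convergent of `θ`. -/
noncomputable def cfP (θ : ℝ) (n : ℕ) : ℕ := ((cfRec θ n).2).2
/-- `β_n = |q_n θ − p_n|`. -/
noncomputable def cfBeta (θ : ℝ) (n : ℕ) : ℝ := |(cfQ θ n : ℝ) * θ - (cfP θ n : ℝ)|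

omit hirr h0 h1 in
lemma cfRec_fst (n : ℕ) : (cfRec θ (n+1)).1.1 = cfQ θ n := rfl
omit hirr h0 h1 in
lemma cfRec_snd (n : ℕ) : (cfRec θ (n+1)).2.1 = cfP θ n := rfl
omit hirr h0 h1 in
lemma cfQ_succ (n : ℕ) : cfQ θ (n+2) = cfA θ (n+1) * cfQ θ (n+1) + cfQ θ n := rfl
omit hirr h0 h1 in
lemma cfP_succ (n : ℕ) : cfP θ (n+2) = cfA θ (n+1) * cfP θ (n+1) + cfP θ n := rfl
omit hirr h0 h1 in
lemma cfQ_zero : cfQ θ 0 = 1 := rfl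
omit hirr h0 h1 in
lemma cfQ_one : cfQ θ 1 = cfA θ 0 := by simp [cfQ, cfRec]
omit hirr h0 h1 in
lemma cfP_zero : cfP θ 0 = 0 := rfl
omit hirr h0 h1 in
lemma cfP_one : cfP θ 1 = 1 := by simp [cfP, cfRec]

/-- `bprod θ n = θ_0 θ_1 ⋯ θ_{n-1}` -/
noncomputable def bprod (θ : ℝ) : ℕ → ℝ
  | 0 => 1
  | n + 1 => bprod θ n * gaussMap^[n] θ

lemma bprod_pos (n : ℕ) : 0 < bprod θ n := by
  induction n with
  | zero => norm_num [bprod]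
  | succ n ih => exact mul_pos ih (gm_iter hirr h0 h1 n).2.1

lemma bprod_lt (n : ℕ) : bprod θ (n + 1) < bprod θ n := by
  have := (gm_iter hirr h0 h1 n).2.2
  have hp := bprod_pos hirr h0 h1 n
  calc bprod θ (n+1) = bprod θ n * gaussMap^[n] θ := rfl
    _ < bprod θ n * 1 := by exact mul_lt_mul_of_pos_left this hp
    _ = bprod θ n := mul_one _

lemma cfA_inv (n : ℕ) : (cfA θ n : ℝ) + gaussMap^[n+1] θ = 1 / gaussMap^[n] θ := by
  obtain ⟨hi, hp, hl⟩ := gm_iter hirr h0 h1 n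
  have h2 : (1:ℝ) / gaussMap^[n] θ ≥ 0 := by positivity
  rw [Function.iterate_succ_apply']
  show (cfA θ n : ℝ) + Int.fract (1 / gaussMap^[n] θ) = 1 / gaussMap^[n] θ
  rw [Int.fract, cfA]
  have : ((⌊1 / gaussMap^[n] θ⌋₊ : ℤ) : ℝ) = ((⌊1 / gaussMap^[n] θ⌋ : ℤ) : ℝ) := by
    norm_cast
    exact (Int.natCast_floor_eq_floor h2)
  push_cast at this ⊢
  rw [this]; ring

lemma cfA_pos (n : ℕ) : 1 ≤ cfA θ n := by
  obtain ⟨hi, hp, hl⟩ := gm_iter hirr h0 h1 n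
  have : (1:ℝ) ≤ 1 / gaussMap^[n] θ := by
    rw [le_div_iff₀ hp]; linarith
  exact (Nat.one_le_floor_iff _).mpr this

lemma cfQ_pos (n : ℕ) : 1 ≤ cfQ θ n := by
  induction n with
  | zero => simp [cfQ, cfRec]
  | succ n ih =>
    have := cfA_pos hirr h0 h1 n
    show 1 ≤ cfA θ n * cfQ θ n + (cfRec θ n).1.1
    calc 1 ≤ 1 * 1 + 0 := by norm_num
      _ ≤ cfA θ n * cfQ θ n + (cfRec θ n).1.1 := by
        exact Nat.add_le_add (Nat.mul_le_mul this ih) (Nat.zero_le _)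


lemma cfQ_mono (n : ℕ) : cfQ θ n ≤ cfQ θ (n+1) := by
  cases n with
  | zero => rw [cfQ_zero, cfQ_one]; exact cfA_pos hirr h0 h1 0
  | succ n =>
    rw [cfQ_succ]
    calc cfQ θ (n+1) = 1 * cfQ θ (n+1) + 0 := by ring
      _ ≤ cfA θ (n+1) * cfQ θ (n+1) + cfQ θ n :=
        Nat.add_le_add (Nat.mul_le_mul_right _ (cfA_pos hirr h0 h1 (n+1))) (Nat.zero_le _)

/-- sign-carrying error: `q_n θ − p_n = (−1)^n bprod (n+1)`, plus the shifted statement. -/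
lemma cf_err (n : ℕ) :
    ((cfRec θ n).1.1 : ℝ) * θ - ((cfRec θ n).2.1 : ℝ) = (-1)^(n+1) * bprod θ n ∧
    (cfQ θ n : ℝ) * θ - (cfP θ n : ℝ) = (-1)^n * bprod θ (n+1) := by
  induction n with
  | zero =>
    constructor
    · simp [cfRec, bprod]
    · simp [cfQ, cfP, cfRec, bprod]
  | succ n ih =>
    obtain ⟨ihp, ihq⟩ := ih
    constructor
    · rw [cfRec_fst, cfRec_snd]; rw [ihq]; ring
    · have hrec : (cfQ θ (n+1) : ℝ) * θ - cfP θ (n+1)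
          = (cfA θ n : ℝ) * ((cfQ θ n : ℝ) * θ - cfP θ n) + (((cfRec θ n).1.1 : ℝ) * θ - (cfRec θ n).2.1) := by
        show ((cfA θ n * cfQ θ n + (cfRec θ n).1.1 : ℕ) : ℝ) * θ - ((cfA θ n * cfP θ n + (cfRec θ n).2.1 : ℕ) : ℝ) = _
        push_cast; ring
      rw [hrec, ihq, ihp]
      have key : gaussMap^[n] θ * ((cfA θ n : ℝ) + gaussMap^[n+1] θ) = 1 := by
        have hgp := (gm_iter hirr h0 h1 n).2.1
        rw [cfA_inv hirr h0 h1 n]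
        field_simp
      have hb2 : bprod θ (n+2) = bprod θ (n+1) * gaussMap^[n+1] θ := rfl
      have hb1 : bprod θ (n+1) = bprod θ n * gaussMap^[n] θ := rfl
      rw [hb2, hb1]
      linear_combination ((-1:ℝ)^n * bprod θ n) * key

lemma cf_err2 (n : ℕ) : (cfQ θ n : ℝ) * θ - (cfP θ n : ℝ) = (-1)^n * bprod θ (n+1) :=
  (cf_err hirr h0 h1 n).2

lemma cfBeta_eq (n : ℕ) : cfBeta θ n = bprod θ (n+1) := by
  rw [cfBeta, cf_err2 hirr h0 h1 n]
  rcases Nat.even_or_odd n with h | h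
  · rw [h.neg_one_pow, one_mul, abs_of_pos (bprod_pos hirr h0 h1 _)]
  · rw [h.neg_one_pow, neg_one_mul, abs_neg, abs_of_pos (bprod_pos hirr h0 h1 _)]

lemma cfBeta_pos (n : ℕ) : 0 < cfBeta θ n := by
  rw [cfBeta_eq hirr h0 h1]; exact bprod_pos hirr h0 h1 _

lemma cfBeta_lt (n : ℕ) : cfBeta θ (n+1) < cfBeta θ n := by
  rw [cfBeta_eq hirr h0 h1, cfBeta_eq hirr h0 h1]; exact bprod_lt hirr h0 h1 _

/-- determinant -/
lemma cf_det (n : ℕ) : (cfQ θ (n+1) : ℤ) * cfP θ n - (cfP θ (n+1) : ℤ) * cfQ θ n = (-1)^(n+1) := by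
  induction n with
  | zero => simp [cfQ, cfP, cfRec]
  | succ n ih =>
    have hq := cfQ_succ (θ := θ) n
    have hp := cfP_succ (θ := θ) n
    push_cast [hq, hp]
    push_cast at ih
    linear_combination -ih

omit hirr h0 h1 in
lemma neg_one_sq_pow (n : ℕ) : ((-1:ℤ)^n) * ((-1:ℤ)^n) = 1 := by
  rw [← pow_add]; exact Even.neg_one_pow ⟨n, rfl⟩

omit hirr h0 h1 in
lemma neg_one_sq_powR (n : ℕ) : ((-1:ℝ)^n) * ((-1:ℝ)^n) = 1 := by
  rw [← pow_add]; exact Even.neg_one_pow ⟨n, rfl⟩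

lemma cf_decomp (n : ℕ) (k m : ℤ) : ∃ a b : ℤ,
    k = a * cfQ θ n + b * cfQ θ (n+1) ∧ m = a * cfP θ n + b * cfP θ (n+1) := by
  have det := cf_det hirr h0 h1 n
  have hdet2 : (cfP θ (n+1) : ℤ) * cfQ θ n - (cfP θ n : ℤ) * cfQ θ (n+1) = (-1)^n := by
    linear_combination -det
  have hs := neg_one_sq_pow n
  refine ⟨(-1)^n * ((cfP θ (n+1) : ℤ) * k - (cfQ θ (n+1) : ℤ) * m),
          (-1)^n * ((cfQ θ n : ℤ) * m - (cfP θ n : ℤ) * k), ?_, ?_⟩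
  · linear_combination (-((-1:ℤ)^n * k)) * hdet2 + (-k) * hs
  · linear_combination (-((-1:ℤ)^n * m)) * hdet2 + (-m) * hs

lemma cf_errval (n : ℕ) (a b : ℤ) :
    (-1:ℝ)^n * ((((a * cfQ θ n + b * cfQ θ (n+1) : ℤ)) : ℝ) * θ - ((a * cfP θ n + b * cfP θ (n+1) : ℤ) : ℝ))
      = (a : ℝ) * cfBeta θ n - (b : ℝ) * cfBeta θ (n+1) := by
  have e1 := cf_err2 hirr h0 h1 n
  have e2 := cf_err2 hirr h0 h1 (n+1)
  have hs := neg_one_sq_powR n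
  rw [cfBeta_eq hirr h0 h1 n, cfBeta_eq hirr h0 h1 (n+1)]
  push_cast
  linear_combination ((-1:ℝ)^n * (a:ℝ)) * e1 + ((-1:ℝ)^n * (b:ℝ)) * e2 + ((a:ℝ) * bprod θ (n+1) - (b:ℝ) * bprod θ (n+2)) * hs

lemma key_ineq (n : ℕ) (k m : ℤ) (hk0 : k ≠ 0)
    (hklo : -(cfQ θ (n+1) : ℤ) < k) (hkhi : k < (cfQ θ (n+1) : ℤ)) :
    cfBeta θ n ≤ |(k : ℝ) * θ - (m : ℝ)| := by
  obtain ⟨a, b, hk, hm⟩ := cf_decomp hirr h0 h1 n k m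
  have hv : (-1:ℝ)^n * ((k : ℝ) * θ - (m : ℝ)) = (a : ℝ) * cfBeta θ n - (b : ℝ) * cfBeta θ (n+1) := by
    rw [hk, hm]; exact cf_errval hirr h0 h1 n a b
  have habs : |(k : ℝ) * θ - (m : ℝ)| = |(a : ℝ) * cfBeta θ n - (b : ℝ) * cfBeta θ (n+1)| := by
    rw [← hv, abs_mul, abs_pow, abs_neg, abs_one, one_pow, one_mul]
  rw [habs]
  exact absL1 (qn := (cfQ θ n : ℤ)) (qn1 := (cfQ θ (n+1) : ℤ)) (cfBeta_pos hirr h0 h1 (n+1)) (cfBeta_lt hirr h0 h1 n)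
    (by exact_mod_cast cfQ_pos hirr h0 h1 n) (by exact_mod_cast cfQ_mono hirr h0 h1 n)
    (by rw [← hk]; exact hk0) (by rw [← hk]; exact hklo) (by rw [← hk]; exact hkhi)

lemma key_cross (n : ℕ) (k m : ℤ)
    (hklo : -(cfQ θ n : ℤ) < k) (hkhi : k < (cfQ θ (n+1) : ℤ))
    (hvlo : -(cfBeta θ n + cfBeta θ (n+1)) < (-1:ℝ)^n * ((k : ℝ) * θ - (m : ℝ)))
    (hvhi : (-1:ℝ)^n * ((k : ℝ) * θ - (m : ℝ)) < 0) : False := by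
  obtain ⟨a, b, hk, hm⟩ := cf_decomp hirr h0 h1 n k m
  have hv : (-1:ℝ)^n * ((k : ℝ) * θ - (m : ℝ)) = (a : ℝ) * cfBeta θ n - (b : ℝ) * cfBeta θ (n+1) := by
    rw [hk, hm]; exact cf_errval hirr h0 h1 n a b
  rw [hv] at hvlo hvhi
  exact absL2 (qn := (cfQ θ n : ℤ)) (qn1 := (cfQ θ (n+1) : ℤ)) (cfBeta_pos hirr h0 h1 (n+1)) (cfBeta_lt hirr h0 h1 n)
    (by exact_mod_cast cfQ_pos hirr h0 h1 n) (by exact_mod_cast cfQ_mono hirr h0 h1 n)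
    (by rw [← hk]; exact hklo) (by rw [← hk]; exact hkhi) hvlo hvhi

lemma bprod_rec (m : ℕ) : bprod θ m = cfA θ m * bprod θ (m+1) + bprod θ (m+2) := by
  have key : gaussMap^[m] θ * ((cfA θ m : ℝ) + gaussMap^[m+1] θ) = 1 := by
    have hgp := (gm_iter hirr h0 h1 m).2.1
    rw [cfA_inv hirr h0 h1 m]
    field_simp
  have hb2 : bprod θ (m+2) = bprod θ m * gaussMap^[m] θ * gaussMap^[m+1] θ := rfl
  have hb1 : bprod θ (m+1) = bprod θ m * gaussMap^[m] θ := rfl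
  rw [hb2, hb1]
  linear_combination (-(bprod θ m)) * key

lemma cfBeta_rec (n : ℕ) :
    cfBeta θ n = cfA θ (n+1) * cfBeta θ (n+1) + cfBeta θ (n+2) := by
  rw [cfBeta_eq hirr h0 h1, cfBeta_eq hirr h0 h1, cfBeta_eq hirr h0 h1]
  exact bprod_rec hirr h0 h1 (n+1)

/-- translation identity: `(q_n + t q_{n+1})θ = (p_n + t p_{n+1}) + (−1)^n (β_n − t β_{n+1})`. -/
lemma trans_id (n t : ℕ) :
    ((cfQ θ n : ℝ) + t * cfQ θ (n+1)) * θ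
      = ((cfP θ n : ℝ) + t * cfP θ (n+1)) + (-1:ℝ)^n * (cfBeta θ n - t * cfBeta θ (n+1)) := by
  have e1 := cf_err2 hirr h0 h1 n
  have e2 := cf_err2 hirr h0 h1 (n+1)
  rw [cfBeta_eq hirr h0 h1 n, cfBeta_eq hirr h0 h1 (n+1)]
  linear_combination e1 + (t:ℝ) * e2

end CF

/-- The arc `I_n ⊆ ℝ/ℤ`: `π([0, β_n))` for `n` even, `π([−β_n, 0))` for `n` odd. -/
noncomputable def arcI (θ : ℝ) (n : ℕ) : Set (AddCircle (1 : ℝ)) :=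
  if Even n then (fun x : ℝ => (x : AddCircle (1 : ℝ))) '' Set.Ico (0 : ℝ) (cfBeta θ n)
  else (fun x : ℝ => (x : AddCircle (1 : ℝ))) '' Set.Ico (-(cfBeta θ n)) 0

/-- The translated arc `π(iθ) + I_n`. -/
noncomputable def arcTrans (θ : ℝ) (n i : ℕ) : Set (AddCircle (1 : ℝ)) :=
  (fun z => ((((i : ℝ) * θ : ℝ) : AddCircle (1 : ℝ)) + z)) '' arcI θ n

/-- the real interval of which `arcI` is the image -/
noncomputable def arcIv (θ : ℝ) (n : ℕ) : Set ℝ :=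
  if Even n then Set.Ico (0 : ℝ) (cfBeta θ n) else Set.Ico (-(cfBeta θ n)) 0

lemma circ_eq_iff {x y : ℝ} :
    (x : AddCircle (1:ℝ)) = (y : AddCircle (1:ℝ)) ↔ ∃ m : ℤ, x - y = m := by
  rw [QuotientAddGroup.eq_iff_sub_mem, AddSubgroup.mem_zmultiples_iff]
  constructor
  · rintro ⟨m, hm⟩; exact ⟨m, by simpa [zsmul_eq_mul] using hm.symm⟩
  · rintro ⟨m, hm⟩; exact ⟨m, by simpa [zsmul_eq_mul] using hm.symm⟩

lemma mem_arcTrans_iff {θ : ℝ} {n i : ℕ} {z : AddCircle (1:ℝ)} :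
    z ∈ arcTrans θ n i ↔ ∃ s ∈ arcIv θ n, z = (((i : ℝ) * θ + s : ℝ) : AddCircle (1:ℝ)) := by
  unfold arcTrans arcI arcIv
  by_cases h : Even n <;>
  · simp only [if_pos, if_neg, h, if_true, if_false, Set.mem_image]
    constructor
    · rintro ⟨w, ⟨s, hs, rfl⟩, rfl⟩
      exact ⟨s, hs, by rw [AddCircle.coe_add]⟩
    · rintro ⟨s, hs, rfl⟩
      exact ⟨(s : AddCircle (1:ℝ)), ⟨s, hs, rfl⟩, by rw [AddCircle.coe_add]⟩

lemma arcIv_diff {θ : ℝ} {n : ℕ} {x y : ℝ} (hx : x ∈ arcIv θ n) (hy : y ∈ arcIv θ n) :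
    |x - y| < cfBeta θ n := by
  unfold arcIv at hx hy
  by_cases h : Even n <;>
    simp only [h, if_true, if_false, Set.mem_Ico] at hx hy <;>
    (rw [abs_sub_lt_iff]; constructor <;> linarith [hx.1, hx.2, hy.1, hy.2])

lemma cross_val {θ : ℝ} {n : ℕ} {x y : ℝ} (hx : x ∈ arcIv θ n) (hy : y ∈ arcIv θ (n+1)) :
    -(cfBeta θ n + cfBeta θ (n+1)) < (-1:ℝ)^n * (y - x) ∧ (-1:ℝ)^n * (y - x) < 0 := by
  unfold arcIv at hx hy
  rcases Nat.even_or_odd n with h | h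
  · have h1 : ¬ Even (n+1) := by simp [Nat.even_add_one, h]
    rw [if_pos h] at hx; rw [if_neg h1] at hy
    rw [h.neg_one_pow, one_mul]
    exact ⟨by linarith [hx.1, hx.2, hy.1, hy.2], by linarith [hx.1, hy.2]⟩
  · have h0 : ¬ Even n := Nat.not_even_iff_odd.mpr h
    have h1 : Even (n+1) := Nat.even_add_one.mpr h0
    rw [if_neg h0] at hx; rw [if_pos h1] at hy
    rw [h.neg_one_pow, neg_one_mul]
    exact ⟨by linarith [hx.1, hx.2, hy.1, hy.2], by linarith [hx.2, hy.1]⟩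

section Main
variable {θ : ℝ} (hirr : Irrational θ) (h0 : 0 < θ) (h1 : θ < 1)
include hirr h0 h1

lemma disj_fam1 {n : ℕ} {i j : ℕ} (hi : i < cfQ θ (n+1)) (hj : j < cfQ θ (n+1)) (hij : i ≠ j) :
    Disjoint (arcTrans θ n i) (arcTrans θ n j) := by
  rw [Set.disjoint_left]
  intro z hz1 hz2
  obtain ⟨x, hx, rfl⟩ := mem_arcTrans_iff.mp hz1
  obtain ⟨y, hy, heq⟩ := mem_arcTrans_iff.mp hz2
  obtain ⟨m, hm⟩ := circ_eq_iff.mp heq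
  set k : ℤ := (i : ℤ) - j with hk
  have hv : (k : ℝ) * θ - m = y - x := by push_cast [hk]; linarith [hm]
  have hkey := key_ineq hirr h0 h1 n k m
    (by rw [hk]; omega) (by rw [hk]; omega) (by rw [hk]; omega)
  rw [hv] at hkey
  linarith [arcIv_diff hy hx, hkey]

lemma disj_fam2 {n : ℕ} {i j : ℕ} (hi : i < cfQ θ n) (hj : j < cfQ θ n) (hij : i ≠ j) :
    Disjoint (arcTrans θ (n+1) i) (arcTrans θ (n+1) j) := by
  rw [Set.disjoint_left]
  intro z hz1 hz2
  obtain ⟨x, hx, rfl⟩ := mem_arcTrans_iff.mp hz1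
  obtain ⟨y, hy, heq⟩ := mem_arcTrans_iff.mp hz2
  obtain ⟨m, hm⟩ := circ_eq_iff.mp heq
  set k : ℤ := (i : ℤ) - j with hk
  have hQ : (cfQ θ n : ℤ) ≤ cfQ θ (n+1) := by exact_mod_cast cfQ_mono hirr h0 h1 n
  have hv : (k : ℝ) * θ - m = y - x := by push_cast [hk]; linarith [hm]
  have hkey := key_ineq hirr h0 h1 n k m
    (by rw [hk]; omega) (by rw [hk]; omega) (by rw [hk]; omega)
  rw [hv] at hkey
  linarith [arcIv_diff hy hx, hkey, cfBeta_lt hirr h0 h1 n]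

lemma disj_cross {n : ℕ} {i j : ℕ} (hi : i < cfQ θ (n+1)) (hj : j < cfQ θ n) :
    Disjoint (arcTrans θ n i) (arcTrans θ (n+1) j) := by
  rw [Set.disjoint_left]
  intro z hz1 hz2
  obtain ⟨x, hx, rfl⟩ := mem_arcTrans_iff.mp hz1
  obtain ⟨y, hy, heq⟩ := mem_arcTrans_iff.mp hz2
  obtain ⟨m, hm⟩ := circ_eq_iff.mp heq
  set k : ℤ := (i : ℤ) - j with hk
  have hv : (k : ℝ) * θ - m = y - x := by push_cast [hk]; linarith [hm]
  obtain ⟨hc1, hc2⟩ := cross_val hx hy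
  exact key_cross hirr h0 h1 n k m
    (by rw [hk]; omega) (by rw [hk]; omega)
    (by rw [hv]; exact hc1) (by rw [hv]; exact hc2)

end Main

section Cover
variable {θ : ℝ} (hirr : Irrational θ) (h0 : 0 < θ) (h1 : θ < 1)
include hirr h0 h1

lemma cover (n : ℕ) : ∀ x : ℝ,
    (x : AddCircle (1:ℝ)) ∈ (⋃ i ∈ Finset.range (cfQ θ (n+1)), arcTrans θ n i) ∪
        ⋃ j ∈ Finset.range (cfQ θ n), arcTrans θ (n+1) j := by
  induction n with
  | zero =>
    intro x
    simp only [Set.mem_union, Set.mem_iUnion, Finset.mem_range, exists_prop]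
    have hb0 : cfBeta θ 0 = θ := by
      simp [cfBeta, cfQ_zero, cfP_zero, abs_of_pos h0]
    have e2 := cf_err2 hirr h0 h1 1
    rw [cfQ_one, cfP_one] at e2
    have hbp2 := bprod_pos hirr h0 h1 2
    have hAθ : (cfA θ 0 : ℝ) * θ < 1 := by
      have : (cfA θ 0 : ℝ) * θ - 1 = -bprod θ 2 := by push_cast at e2; rw [e2]; ring
      linarith
    have hb1 : cfBeta θ 1 = 1 - (cfA θ 0 : ℝ) * θ := by
      rw [cfBeta, cfQ_one, cfP_one]
      push_cast
      rw [abs_of_neg (by linarith)]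
      ring
    have hy0 : 0 ≤ Int.fract x := Int.fract_nonneg x
    have hy1 : Int.fract x < 1 := Int.fract_lt_one x
    have hxy : x - Int.fract x = (⌊x⌋ : ℝ) := by rw [Int.fract]; ring
    by_cases hc : Int.fract x < (cfA θ 0 : ℝ) * θ
    · left
      set i := ⌊Int.fract x / θ⌋₊ with hidef
      have hdiv0 : 0 ≤ Int.fract x / θ := by positivity
      have hile : (i : ℝ) * θ ≤ Int.fract x := by
        have := Nat.floor_le hdiv0
        rw [← hidef] at this
        calc (i:ℝ) * θ ≤ (Int.fract x / θ) * θ := mul_le_mul_of_nonneg_right this (le_of_lt h0)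
          _ = Int.fract x := div_mul_cancel₀ _ (ne_of_gt h0)
      have hilt : Int.fract x < ((i:ℝ) + 1) * θ := by
        have := Nat.lt_floor_add_one (Int.fract x / θ)
        rw [← hidef] at this
        calc Int.fract x = (Int.fract x / θ) * θ := (div_mul_cancel₀ _ (ne_of_gt h0)).symm
          _ < ((i:ℝ) + 1) * θ := mul_lt_mul_of_pos_right this h0
      refine ⟨i, ?_, ?_⟩
      · rw [cfQ_one]
        rw [hidef]
        apply (Nat.floor_lt hdiv0).mpr
        rw [div_lt_iff₀ h0]
        exact hc
      · apply mem_arcTrans_iff.mpr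
        refine ⟨Int.fract x - (i:ℝ) * θ, ?_, ?_⟩
        · have : Even 0 := Even.zero
          simp only [arcIv, this, if_true, Set.mem_Ico, hb0]
          constructor
          · linarith
          · linarith
        · apply (circ_eq_iff (x := x)).mpr
          exact ⟨⌊x⌋, by rw [← hxy]; ring⟩
    · right
      refine ⟨0, by rw [cfQ_zero]; norm_num, ?_⟩
      apply mem_arcTrans_iff.mpr
      refine ⟨Int.fract x - 1, ?_, ?_⟩
      · have hodd : ¬ Even 1 := by decide
        simp only [arcIv, hodd, if_false, Set.mem_Ico, hb1]
        constructor
        · push_neg at hc; linarith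
        · linarith
      · apply (circ_eq_iff (x := x)).mpr
        refine ⟨⌊x⌋ + 1, ?_⟩
        push_cast
        rw [← hxy]
        ring
  | succ n ih =>
    intro x
    have hx := ih x
    simp only [Set.mem_union, Set.mem_iUnion, Finset.mem_range, exists_prop] at hx ⊢
    rcases hx with ⟨i, hi, hmem⟩ | ⟨j, hj, hmem⟩
    · -- hard case: level n arc
      obtain ⟨s, hs, heq⟩ := mem_arcTrans_iff.mp hmem
      obtain ⟨m, hm⟩ := circ_eq_iff.mp heq
      have hrec := cfBeta_rec hirr h0 h1 n
      have hb1p := cfBeta_pos hirr h0 h1 (n+1)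
      have hb2p := cfBeta_pos hirr h0 h1 (n+2)
      have hA2 := cfA_pos hirr h0 h1 (n+1)
      -- index bound helper
      have hidx : ∀ t : ℕ, t < cfA θ (n+1) → i + cfQ θ n + t * cfQ θ (n+1) < cfQ θ (n+2) := by
        intro t ht
        rw [cfQ_succ]
        have h1' : (t + 1) * cfQ θ (n+1) ≤ cfA θ (n+1) * cfQ θ (n+1) :=
          Nat.mul_le_mul_right _ (by omega)
        have h2' : (t + 1) * cfQ θ (n+1) = t * cfQ θ (n+1) + cfQ θ (n+1) := by ring
        omega
      rcases Nat.even_or_odd n with hev | hod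
      · -- n even : s ∈ [0, βn)
        have hoddn1 : ¬ Even (n+1) := by simp [Nat.even_add_one, hev]
        have hevn2 : Even (n+2) := by
          rcases hev with ⟨r, hr⟩; exact ⟨r+1, by omega⟩
        have hsx : s ∈ Set.Ico (0:ℝ) (cfBeta θ n) := by
          simpa only [arcIv, hev, if_true] using hs
        by_cases hsmall : s < cfBeta θ (n+2)
        · right
          refine ⟨i, hi, ?_⟩
          apply mem_arcTrans_iff.mpr
          refine ⟨s, ?_, heq⟩
          simp only [arcIv, hevn2, if_true, Set.mem_Ico]
          exact ⟨hsx.1, hsmall⟩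
        · left
          push_neg at hsmall
          have harg0 : 0 ≤ (s - cfBeta θ (n+2)) / cfBeta θ (n+1) := by
            apply div_nonneg (by linarith) (le_of_lt hb1p)
          set u := ⌊(s - cfBeta θ (n+2)) / cfBeta θ (n+1)⌋₊ with hudef
          have hu_lt : u < cfA θ (n+1) := by
            rw [hudef]
            apply (Nat.floor_lt harg0).mpr
            rw [div_lt_iff₀ hb1p]
            have := hsx.2
            nlinarith [hrec]
          have hu_le : (u : ℝ) * cfBeta θ (n+1) ≤ s - cfBeta θ (n+2) := by
            have := Nat.floor_le harg0
            rw [← hudef] at this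
            calc (u:ℝ) * cfBeta θ (n+1) ≤ ((s - cfBeta θ (n+2)) / cfBeta θ (n+1)) * cfBeta θ (n+1) :=
                mul_le_mul_of_nonneg_right this (le_of_lt hb1p)
              _ = s - cfBeta θ (n+2) := div_mul_cancel₀ _ (ne_of_gt hb1p)
          have hu_hi : s - cfBeta θ (n+2) < ((u:ℝ) + 1) * cfBeta θ (n+1) := by
            have := Nat.lt_floor_add_one ((s - cfBeta θ (n+2)) / cfBeta θ (n+1))
            rw [← hudef] at this
            calc s - cfBeta θ (n+2) = ((s - cfBeta θ (n+2)) / cfBeta θ (n+1)) * cfBeta θ (n+1) :=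
                (div_mul_cancel₀ _ (ne_of_gt hb1p)).symm
              _ < ((u:ℝ) + 1) * cfBeta θ (n+1) := mul_lt_mul_of_pos_right this hb1p
          refine ⟨i + cfQ θ n + (cfA θ (n+1) - 1 - u) * cfQ θ (n+1), hidx _ (by omega), ?_⟩
          have htR : ((cfA θ (n+1) - 1 - u : ℕ) : ℝ) = (cfA θ (n+1) : ℝ) - 1 - u := by
            have h' : (cfA θ (n+1) - 1 - u) + u + 1 = cfA θ (n+1) := by omega
            have h'' := congrArg (fun k : ℕ => (k:ℝ)) h'
            push_cast at h''
            linarith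
          apply mem_arcTrans_iff.mpr
          set t : ℕ := cfA θ (n+1) - 1 - u with htdef
          refine ⟨s - (cfBeta θ n - (t:ℝ) * cfBeta θ (n+1)), ?_, ?_⟩
          · simp only [arcIv, hoddn1, if_false, Set.mem_Ico]
            rw [htR]
            constructor
            · nlinarith [hrec, hu_le]
            · nlinarith [hrec, hu_hi]
          · apply (circ_eq_iff (x := x)).mpr
            have tid := trans_id hirr h0 h1 n t
            rw [hev.neg_one_pow, one_mul] at tid
            refine ⟨m - ((cfP θ n : ℤ) + (t : ℤ) * (cfP θ (n+1) : ℤ)), ?_⟩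
            push_cast
            push_cast at hm tid
            linarith [hm, tid]
      · -- n odd : s ∈ [−βn, 0)
        have hnev : ¬ Even n := Nat.not_even_iff_odd.mpr hod
        have hevn1 : Even (n+1) := Nat.even_add_one.mpr hnev
        have hoddn2 : ¬ Even (n+2) := by
          intro hc
          rcases hc with ⟨r, hr⟩
          exact hnev ⟨r-1, by omega⟩
        have hsx : s ∈ Set.Ico (-(cfBeta θ n)) (0:ℝ) := by
          simpa only [arcIv, hnev, if_false] using hs
        by_cases hsmall : -(cfBeta θ (n+2)) ≤ s
        · right
          refine ⟨i, hi, ?_⟩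
          apply mem_arcTrans_iff.mpr
          refine ⟨s, ?_, heq⟩
          simp only [arcIv, hoddn2, if_false, Set.mem_Ico]
          exact ⟨hsmall, hsx.2⟩
        · left
          push_neg at hsmall
          have harg0 : 0 ≤ (s + cfBeta θ n) / cfBeta θ (n+1) := by
            apply div_nonneg (by linarith [hsx.1]) (le_of_lt hb1p)
          set u := ⌊(s + cfBeta θ n) / cfBeta θ (n+1)⌋₊ with hudef
          have hu_lt : u < cfA θ (n+1) := by
            rw [hudef]
            apply (Nat.floor_lt harg0).mpr
            rw [div_lt_iff₀ hb1p]
            nlinarith [hrec, hsmall]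
          have hu_le : (u : ℝ) * cfBeta θ (n+1) ≤ s + cfBeta θ n := by
            have := Nat.floor_le harg0
            rw [← hudef] at this
            calc (u:ℝ) * cfBeta θ (n+1) ≤ ((s + cfBeta θ n) / cfBeta θ (n+1)) * cfBeta θ (n+1) :=
                mul_le_mul_of_nonneg_right this (le_of_lt hb1p)
              _ = s + cfBeta θ n := div_mul_cancel₀ _ (ne_of_gt hb1p)
          have hu_hi : s + cfBeta θ n < ((u:ℝ) + 1) * cfBeta θ (n+1) := by
            have := Nat.lt_floor_add_one ((s + cfBeta θ n) / cfBeta θ (n+1))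
            rw [← hudef] at this
            calc s + cfBeta θ n = ((s + cfBeta θ n) / cfBeta θ (n+1)) * cfBeta θ (n+1) :=
                (div_mul_cancel₀ _ (ne_of_gt hb1p)).symm
              _ < ((u:ℝ) + 1) * cfBeta θ (n+1) := mul_lt_mul_of_pos_right this hb1p
          refine ⟨i + cfQ θ n + u * cfQ θ (n+1), hidx _ hu_lt, ?_⟩
          apply mem_arcTrans_iff.mpr
          refine ⟨s + cfBeta θ n - (u:ℝ) * cfBeta θ (n+1), ?_, ?_⟩
          · simp only [arcIv, hevn1, if_true, Set.mem_Ico]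
            constructor
            · linarith [hu_le]
            · linarith [hu_hi]
          · apply (circ_eq_iff (x := x)).mpr
            have tid := trans_id hirr h0 h1 n u
            rw [hod.neg_one_pow, neg_one_mul] at tid
            refine ⟨m - ((cfP θ n : ℤ) + (u : ℤ) * (cfP θ (n+1) : ℤ)), ?_⟩
            push_cast
            push_cast at hm tid
            linarith [hm, tid]
    · -- easy case: level n+1 arc persists
      -- old level n+1 arcs are among new level n+1 arcs
      left
      refine ⟨j, ?_, hmem⟩
      calc j < cfQ θ n := hj
        _ ≤ cfQ θ (n+2) := by rw [cfQ_succ]; exact Nat.le_add_left _ _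

end Cover

/-- **Dynamical partition of the circle.** For irrational `θ ∈ (0,1)` and every `n`, the
`q_{n+1}` arcs `π(iθ) + I_n` (`0 ≤ i < q_{n+1}`) together with the `q_n` arcs
`π(iθ) + I_{n+1}` (`0 ≤ i < q_n`) are pairwise disjoint and their union is all of `ℝ/ℤ`. -/
theorem dynamical_partition_of_circle
    (θ : ℝ) (hirr : Irrational θ) (h0 : 0 < θ) (h1 : θ < 1) (n : ℕ) :
    (∀ i j : ℕ, i < cfQ θ (n + 1) → j < cfQ θ (n + 1) → i ≠ j →
        Disjoint (arcTrans θ n i) (arcTrans θ n j)) ∧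
      (∀ i j : ℕ, i < cfQ θ n → j < cfQ θ n → i ≠ j →
        Disjoint (arcTrans θ (n + 1) i) (arcTrans θ (n + 1) j)) ∧
      (∀ i j : ℕ, i < cfQ θ (n + 1) → j < cfQ θ n →
        Disjoint (arcTrans θ n i) (arcTrans θ (n + 1) j)) ∧
      ((⋃ i ∈ Finset.range (cfQ θ (n + 1)), arcTrans θ n i) ∪
          (⋃ j ∈ Finset.range (cfQ θ n), arcTrans θ (n + 1) j) = Set.univ) := by
  refine ⟨fun i j hi hj hij => disj_fam1 hirr h0 h1 hi hj hij,
          fun i j hi hj hij => disj_fam2 hirr h0 h1 hi hj hij,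
          fun i j hi hj => disj_cross hirr h0 h1 hi hj, ?_⟩
  apply Set.eq_univ_of_forall
  intro z
  obtain ⟨x, rfl⟩ := QuotientAddGroup.mk_surjective z
  exact cover hirr h0 h1 n x
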